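/- arXiv:1405.6412 — 3 statements merged into one kernel-verified Lean document; each statement's English description precedes it below -/
import Mathlib

section
/- Minkowski's determinant inequality: for symmetric positive semidefinite n×n matrices A and B, det(A + B)^{1/n} ≥ det(A)^{1/n} + det(B)^{1/n}. -/
open Matrix Finset

/-- Superadditivity of the geometric mean: `∏ (1 + x i) ^ (1/n) ≥ 1 + ∏ x i ^ (1/n)`. -/
private lemma geom_superadd {n : ℕ} (hn : 0 < n) (x : Fin n → ℝ) (hx : ∀ i, 0 ≤ x i) :
    1 + (∏ i, x i) ^ ((n : ℝ)⁻¹) ≤ (∏ i, (1 + x i)) ^ ((n : ℝ)⁻¹) := by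
  have h1 : ∀ i : Fin n, (0:ℝ) < 1 + x i := fun i => by linarith [hx i]
  have hP : (0:ℝ) < ∏ i, (1 + x i) := Finset.prod_pos fun i _ => h1 i
  have hn' : (0:ℝ) < n := by exact_mod_cast hn
  have hw : ∑ _i : Fin n, (n:ℝ)⁻¹ = 1 := by
    rw [Finset.sum_const, Finset.card_univ, Fintype.card_fin, nsmul_eq_mul,
      mul_inv_cancel₀ hn'.ne']
  have g1 := Real.geom_mean_le_arith_mean_weighted Finset.univ (fun _ => (n:ℝ)⁻¹)
      (fun i => x i / (1 + x i)) (fun i _ => by positivity) hw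
      (fun i _ => div_nonneg (hx i) (h1 i).le)
  have g2 := Real.geom_mean_le_arith_mean_weighted Finset.univ (fun _ => (n:ℝ)⁻¹)
      (fun i => 1 / (1 + x i)) (fun i _ => by positivity) hw
      (fun i _ => one_div_nonneg.mpr (h1 i).le)
  have hsum : (∑ i, (n:ℝ)⁻¹ * (x i / (1 + x i))) + ∑ i, (n:ℝ)⁻¹ * (1 / (1 + x i)) = 1 := by
    rw [← Finset.sum_add_distrib, ← hw]
    apply Finset.sum_congr rfl
    intro i _
    have := (h1 i).ne'
    simp only [hw]
    field_simp
    ring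
  have key : (∏ i, (x i / (1 + x i)) ^ ((n:ℝ)⁻¹)) + ∏ i, (1 / (1 + x i)) ^ ((n:ℝ)⁻¹) ≤ 1 := by
    calc (∏ i, (x i / (1 + x i)) ^ ((n:ℝ)⁻¹)) + ∏ i, (1 / (1 + x i)) ^ ((n:ℝ)⁻¹)
        ≤ (∑ i, (n:ℝ)⁻¹ * (x i / (1 + x i))) + ∑ i, (n:ℝ)⁻¹ * (1 / (1 + x i)) :=
          add_le_add g1 g2
      _ = 1 := hsum
  have e1 : (∏ i, (x i / (1 + x i)) ^ ((n:ℝ)⁻¹))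
      = (∏ i, x i) ^ ((n:ℝ)⁻¹) / (∏ i, (1 + x i)) ^ ((n:ℝ)⁻¹) := by
    rw [Finset.prod_congr rfl (fun i _ => Real.div_rpow (hx i) (h1 i).le ((n:ℝ)⁻¹)),
        Finset.prod_div_distrib,
        Real.finset_prod_rpow _ _ (fun i _ => hx i),
        Real.finset_prod_rpow _ _ (fun i _ => (h1 i).le)]
  have e2 : (∏ i, (1 / (1 + x i)) ^ ((n:ℝ)⁻¹))
      = 1 / (∏ i, (1 + x i)) ^ ((n:ℝ)⁻¹) := by
    have h : ∀ i : Fin n, (1 / (1 + x i)) ^ ((n:ℝ)⁻¹) = 1 / (1 + x i) ^ ((n:ℝ)⁻¹) := fun i => by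
      rw [Real.div_rpow zero_le_one (h1 i).le, Real.one_rpow]
    rw [Finset.prod_congr rfl (fun i _ => h i), Finset.prod_div_distrib,
        Finset.prod_const_one, Real.finset_prod_rpow _ _ (fun i _ => (h1 i).le)]
  rw [e1, e2, ← add_div, div_le_one (Real.rpow_pos_of_pos hP _)] at key
  linarith [key]

private lemma psd_det_nonneg {n : ℕ} {A : Matrix (Fin n) (Fin n) ℝ} (hA : A.PosSemidef) :
    0 ≤ A.det := by
  rw [hA.1.det_eq_prod_eigenvalues]
  exact Finset.prod_nonneg fun i _ => by
    simpa using hA.eigenvalues_nonneg i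

open scoped MatrixOrder in
/-- Key case: `P` positive semidefinite with nonzero determinant, `Q` positive semidefinite. -/
private lemma det_rpow_add_le {n : ℕ} (hn : 0 < n) (P Q : Matrix (Fin n) (Fin n) ℝ)
    (hP : P.PosSemidef) (hQ : Q.PosSemidef) (hPd : P.det ≠ 0) :
    P.det ^ ((n : ℝ)⁻¹) + Q.det ^ ((n : ℝ)⁻¹) ≤ (P + Q).det ^ ((n : ℝ)⁻¹) := by
  set S := CFC.sqrt P with hSdef
  have hS : S.PosSemidef := (CFC.sqrt_nonneg P).posSemidef
  have hSS : S * S = P := CFC.sqrt_mul_sqrt_self P hP.nonneg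
  have hSSdet : S.det * S.det = P.det := by rw [← det_mul, hSS]
  have hdS : S.det ≠ 0 := fun h => hPd (by rw [← hSSdet, h, mul_zero])
  have hdSu : IsUnit S.det := isUnit_iff_ne_zero.mpr hdS
  have h1 : S * S⁻¹ = 1 := mul_nonsing_inv S hdSu
  have h2 : S⁻¹ * S = 1 := nonsing_inv_mul S hdSu
  have hSinvH : (S⁻¹)ᴴ = S⁻¹ := by rw [conjTranspose_nonsing_inv, hS.1.eq]
  set C := S⁻¹ * Q * S⁻¹ with hCdef
  have hC : C.PosSemidef := by
    have := hQ.conjTranspose_mul_mul_same S⁻¹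
    rwa [hSinvH] at this
  have hSCS : S * C * S = Q := by
    calc S * (S⁻¹ * Q * S⁻¹) * S = (S * S⁻¹) * Q * (S⁻¹ * S) := by
          simp only [← Matrix.mul_assoc]
      _ = Q := by rw [h1, h2, one_mul, mul_one]
  have hdecomp : S * (1 + C) * S = P + Q := by
    rw [mul_add, add_mul, mul_one, hSS, hSCS]
  have hCH : C.IsHermitian := hC.1
  set μ := hCH.eigenvalues with hμdef
  have hμ : ∀ i, 0 ≤ μ i := hC.eigenvalues_nonneg
  -- determinant of 1 + C
  set U : Matrix (Fin n) (Fin n) ℝ := (hCH.eigenvectorUnitary : Matrix (Fin n) (Fin n) ℝ)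
    with hUdef
  have hU : U * star U = 1 := mem_unitaryGroup_iff.mp hCH.eigenvectorUnitary.2
  have hdetconj : ∀ M : Matrix (Fin n) (Fin n) ℝ, (U * M * star U).det = M.det := by
    intro M
    calc (U * M * star U).det = U.det * M.det * (star U).det := by rw [det_mul, det_mul]
      _ = (U.det * (star U).det) * M.det := by ring
      _ = (U * star U).det * M.det := by rw [det_mul]
      _ = M.det := by rw [hU, det_one, one_mul]
  have hspec : C = U * diagonal (RCLike.ofReal ∘ μ) * star U := hCH.spectral_theorem
  have hdet1C : (1 + C).det = ∏ i, (1 + μ i) := by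
    have h1C : 1 + C = U * (1 + diagonal (RCLike.ofReal ∘ μ)) * star U := by
      rw [mul_add, add_mul, mul_one, hU, ← hspec]
    rw [h1C, hdetconj]
    have : (1 : Matrix (Fin n) (Fin n) ℝ) + diagonal (RCLike.ofReal ∘ μ)
        = diagonal (fun i => 1 + μ i) := by
      rw [← diagonal_one, diagonal_add]
      congr 1
    rw [this, det_diagonal]
  have hdetC : C.det = ∏ i, μ i := by
    rw [hCH.det_eq_prod_eigenvalues]
    simp [RCLike.ofReal_real_eq_id, hμdef]
  have hdetPQ : (P + Q).det = P.det * ∏ i, (1 + μ i) := by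
    rw [← hdecomp, det_mul, det_mul, hdet1C]
    rw [← hSSdet]; ring
  have hdetQ : Q.det = P.det * ∏ i, μ i := by
    rw [← hSCS, det_mul, det_mul, hdetC, ← hSSdet]; ring
  have hPdpos : 0 < P.det := (psd_det_nonneg hP).lt_of_ne' hPd
  have hμprod : 0 ≤ ∏ i, μ i := Finset.prod_nonneg fun i _ => hμ i
  calc P.det ^ ((n:ℝ)⁻¹) + Q.det ^ ((n:ℝ)⁻¹)
      = P.det ^ ((n:ℝ)⁻¹) + P.det ^ ((n:ℝ)⁻¹) * (∏ i, μ i) ^ ((n:ℝ)⁻¹) := by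
        rw [hdetQ, Real.mul_rpow hPdpos.le hμprod]
    _ = P.det ^ ((n:ℝ)⁻¹) * (1 + (∏ i, μ i) ^ ((n:ℝ)⁻¹)) := by ring
    _ ≤ P.det ^ ((n:ℝ)⁻¹) * (∏ i, (1 + μ i)) ^ ((n:ℝ)⁻¹) := by
        exact mul_le_mul_of_nonneg_left (geom_superadd hn μ hμ)
          (Real.rpow_nonneg hPdpos.le _)
    _ = (P + Q).det ^ ((n:ℝ)⁻¹) := by
        rw [hdetPQ, Real.mul_rpow hPdpos.le
          (Finset.prod_nonneg fun i _ => by linarith [hμ i])]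

/-- Minkowski's determinant inequality: for symmetric PSD `n×n` matrices `A` and `B`,
`det (A + B)^{1/n} ≥ det A^{1/n} + det B^{1/n}`. -/
theorem minkowski_det_inequality {n : ℕ} (hn : 0 < n)
    (A B : Matrix (Fin n) (Fin n) ℝ) (hA : A.PosSemidef) (hB : B.PosSemidef) :
    A.det ^ ((n : ℝ)⁻¹) + B.det ^ ((n : ℝ)⁻¹) ≤ (A + B).det ^ ((n : ℝ)⁻¹) := by
  have hninv : ((n:ℝ)⁻¹) ≠ 0 := by positivity
  rcases eq_or_ne A.det 0 with hA0 | hA0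
  · rcases eq_or_ne B.det 0 with hB0 | hB0
    · rw [hA0, hB0, Real.zero_rpow hninv, add_zero]
      exact Real.rpow_nonneg (psd_det_nonneg (hA.add hB)) _
    · have h := det_rpow_add_le hn B A hB hA hB0
      rw [hA0, Real.zero_rpow hninv, zero_add]
      calc B.det ^ ((n:ℝ)⁻¹) ≤ B.det ^ ((n:ℝ)⁻¹) + A.det ^ ((n:ℝ)⁻¹) := by
            have := Real.rpow_nonneg (psd_det_nonneg hA) ((n:ℝ)⁻¹); linarith
        _ ≤ (B + A).det ^ ((n:ℝ)⁻¹) := h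
        _ = (A + B).det ^ ((n:ℝ)⁻¹) := by rw [add_comm]
  · exact det_rpow_add_le hn A B hA hB hA0
end

section
/- For the discretized empirical Gramian of a linear system y = Cx, ẋ = Ax, with perturbation direction sets T = {I, −I} and any perturbation size c > 0, the contributions from +I and −I are equal, and the resulting empirical Gramian equals Σ_k (e^{Aᵀ t_k} Cᵀ C e^{A t_k}) Δt_k, independent of c. -/
open Matrix NormedSpace Finset

/-- For the discretized empirical Gramian of the linear system `ẋ = Ax, y = Cx` with
perturbation directions `T = {I, −I}` and any perturbation size `c > 0`, the contributions
from `+I` and `−I` are equal, and the resulting empirical Gramian equals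
`Σ_k Δt_k e^{Aᵀ t_k} Cᵀ C e^{A t_k}`, independently of `c`. -/
theorem empirical_gramian_linear {n p K : ℕ}
    (A : Matrix (Fin n) (Fin n) ℝ) (C : Matrix (Fin p) (Fin n) ℝ)
    (c : ℝ) (hc : 0 < c) (t Δt : ℕ → ℝ)
    (Tdir : Fin 2 → Matrix (Fin n) (Fin n) ℝ)
    (hTdir : Tdir = ![(1 : Matrix (Fin n) (Fin n) ℝ), -1])
    (sgn : Fin 2 → ℝ) (hsgn : sgn = ![1, -1])
    (Ψ : Fin 2 → ℕ → Matrix (Fin n) (Fin n) ℝ)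
    (hΨ : Ψ = fun l k => Matrix.of fun i j =>
      ∑ o : Fin p, (sgn l * c * (C * exp (t k • A)) o i) *
        (sgn l * c * (C * exp (t k • A)) o j)) :
    (∀ k, Tdir 0 * Ψ 0 k * (Tdir 0)ᵀ = Tdir 1 * Ψ 1 k * (Tdir 1)ᵀ) ∧
    (∑ l : Fin 2, (1 / (2 * c ^ 2)) • ∑ k ∈ Finset.range K,
        (Δt k) • (Tdir l * Ψ l k * (Tdir l)ᵀ))
      = ∑ k ∈ Finset.range K,
        (Δt k) • (exp (t k • Aᵀ) * (Cᵀ * C) * exp (t k • A)) := by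
  subst hTdir hsgn hΨ
  have hexpT : ∀ k : ℕ, exp (t k • Aᵀ) = (exp (t k • A))ᵀ := by
    intro k
    rw [← Matrix.transpose_smul, Matrix.exp_transpose]
  have key : ∀ (l : Fin 2) (k : ℕ),
      (Matrix.of fun i j =>
        ∑ o : Fin p, ((![(1:ℝ),-1] l) * c * (C * exp (t k • A)) o i) *
          ((![(1:ℝ),-1] l) * c * (C * exp (t k • A)) o j))
      = (c ^ 2) • (exp (t k • Aᵀ) * (Cᵀ * C) * exp (t k • A)) := by
    intro l k
    have h2 : exp (t k • Aᵀ) * (Cᵀ * C) * exp (t k • A)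
        = (C * exp (t k • A))ᵀ * (C * exp (t k • A)) := by
      rw [hexpT, Matrix.transpose_mul]
      simp only [Matrix.mul_assoc]
    rw [h2]
    set M := C * exp (t k • A) with hM
    ext i j
    simp only [Matrix.of_apply, Matrix.smul_apply, smul_eq_mul, Matrix.mul_apply,
      Matrix.transpose_apply, Finset.mul_sum]
    refine Finset.sum_congr rfl fun o _ => ?_
    have hs : (![(1:ℝ),-1] l) * (![(1:ℝ),-1] l) = 1 := by fin_cases l <;> norm_num
    calc (![(1:ℝ),-1] l * c * M o i) *
          (![(1:ℝ),-1] l * c * M o j)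
        = (![(1:ℝ),-1] l * ![(1:ℝ),-1] l) *
          (c ^ 2 * (M o i * M o j)) := by ring
      _ = c ^ 2 * (M o i * M o j) := by
          rw [hs, one_mul]
  have hconj : ∀ (l : Fin 2) (k : ℕ),
      (![(1 : Matrix (Fin n) (Fin n) ℝ), -1] l) *
        (Matrix.of fun i j =>
          ∑ o : Fin p, ((![(1:ℝ),-1] l) * c * (C * exp (t k • A)) o i) *
            ((![(1:ℝ),-1] l) * c * (C * exp (t k • A)) o j)) *
        (![(1 : Matrix (Fin n) (Fin n) ℝ), -1] l)ᵀ
      = (c ^ 2) • (exp (t k • Aᵀ) * (Cᵀ * C) * exp (t k • A)) := by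
    intro l k
    rw [key l k]
    fin_cases l <;> simp
  constructor
  · intro k
    rw [hconj 0 k, hconj 1 k]
  · have hS : ∀ l : Fin 2, (∑ k ∈ Finset.range K, (Δt k) •
        ((![(1 : Matrix (Fin n) (Fin n) ℝ), -1] l) *
          (Matrix.of fun i j =>
            ∑ o : Fin p, ((![(1:ℝ),-1] l) * c * (C * exp (t k • A)) o i) *
              ((![(1:ℝ),-1] l) * c * (C * exp (t k • A)) o j)) *
          (![(1 : Matrix (Fin n) (Fin n) ℝ), -1] l)ᵀ))
        = (c ^ 2) • ∑ k ∈ Finset.range K,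
            (Δt k) • (exp (t k • Aᵀ) * (Cᵀ * C) * exp (t k • A)) := by
      intro l
      rw [Finset.smul_sum]
      refine Finset.sum_congr rfl fun k _ => ?_
      rw [hconj l k, smul_comm]
    rw [Fin.sum_univ_two, hS 0, hS 1, ← add_smul, smul_smul]
    have : (1 / (2 * c ^ 2) + 1 / (2 * c ^ 2)) * c ^ 2 = 1 := by
      field_simp
      ring
    rw [this, one_smul]
end

section
/- The empirical observability Gramian of a linear system equals the Riemann-sum approximation of the exact observability Gramian and converges to ∫₀^{t_f} e^{Aᵀt} Cᵀ C e^{At} dt as the mesh of the time discretization tends to zero. -/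
open Matrix NormedSpace Finset MeasureTheory

attribute [local instance] Matrix.normedAddCommGroup Matrix.normedSpace

private lemma exp_smul_cont' {n : ℕ} (A : Matrix (Fin n) (Fin n) ℝ) :
    Continuous fun s : ℝ => NormedSpace.exp (s • A) := by
  letI hR : NormedRing (Matrix (Fin n) (Fin n) ℝ) := Matrix.linftyOpNormedRing
  letI : NormedAlgebra ℝ (Matrix (Fin n) (Fin n) ℝ) := Matrix.linftyOpNormedAlgebra
  letI : NormedAlgebra ℚ (Matrix (Fin n) (Fin n) ℝ) := NormedAlgebra.restrictScalars ℚ ℝ _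
  haveI : @CompleteSpace (Matrix (Fin n) (Fin n) ℝ) hR.toUniformSpace :=
    FiniteDimensional.complete ℝ _
  exact exp_continuous.comp (continuous_id.smul continuous_const)

private lemma psi_eq {n p : ℕ} (A : Matrix (Fin n) (Fin n) ℝ) (C : Matrix (Fin p) (Fin n) ℝ)
    (c : ℝ) (s : ℝ) (σ : ℝ) (hσ : σ ^ 2 = 1) :
    (Matrix.of fun i j => ∑ o : Fin p, (σ * c * (C * NormedSpace.exp (s • A)) o i) *
        (σ * c * (C * NormedSpace.exp (s • A)) o j))
      = (c ^ 2) • (NormedSpace.exp (s • Aᵀ) * (Cᵀ * C) * NormedSpace.exp (s • A)) := by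
  have hT : NormedSpace.exp (s • Aᵀ) = (NormedSpace.exp (s • A))ᵀ := by
    rw [← transpose_smul, exp_transpose]
  set M := C * NormedSpace.exp (s • A) with hM
  have h2 : NormedSpace.exp (s • Aᵀ) * (Cᵀ * C) * NormedSpace.exp (s • A) = Mᵀ * M := by
    rw [hT, hM, transpose_mul]
    simp only [Matrix.mul_assoc]
  rw [h2]
  ext i j
  simp only [of_apply, Matrix.smul_apply, mul_apply, transpose_apply, smul_eq_mul, Finset.mul_sum]
  refine Finset.sum_congr rfl fun o _ => ?_
  have : σ * c * M o i * (σ * c * M o j) = σ ^ 2 * (c ^ 2 * (M o i * M o j)) := by ring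
  rw [this, hσ, one_mul]

/-- The empirical observability Gramian of a linear system (directions `{I, −I}`, size `c > 0`,
partition `0 = t_0 < … < t_K = t_f`) equals the Riemann-sum approximation of the exact
observability Gramian, and converges to `∫₀^{t_f} e^{Aᵀt} Cᵀ C e^{At} dt` as the mesh of the
time discretization tends to zero. -/
theorem empirical_gramian_riemann_sum_tendsto {n p : ℕ}
    (A : Matrix (Fin n) (Fin n) ℝ) (C : Matrix (Fin p) (Fin n) ℝ)
    (c : ℝ) (hc : 0 < c) (tf : ℝ) (htf : 0 < tf)
    (Tdir : Fin 2 → Matrix (Fin n) (Fin n) ℝ)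
    (hTdir : Tdir = ![(1 : Matrix (Fin n) (Fin n) ℝ), -1])
    (sgn : Fin 2 → ℝ) (hsgn : sgn = ![1, -1])
    (F : ℝ → Matrix (Fin n) (Fin n) ℝ)
    (hF : F = fun s => NormedSpace.exp (s • Aᵀ) * (Cᵀ * C) * NormedSpace.exp (s • A))
    (Ψ : (ℕ → ℝ) → Fin 2 → ℕ → Matrix (Fin n) (Fin n) ℝ)
    (hΨ : Ψ = fun t l k => Matrix.of fun i j =>
      ∑ o : Fin p, (sgn l * c * (C * NormedSpace.exp (t k • A)) o i) *
        (sgn l * c * (C * NormedSpace.exp (t k • A)) o j))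
    (G : (ℕ → ℝ) → ℕ → Matrix (Fin n) (Fin n) ℝ)
    (hG : G = fun t K => ∑ l : Fin 2, (1 / (2 * c ^ 2)) •
      ∑ k ∈ Finset.range K, (t (k + 1) - t k) • (Tdir l * Ψ t l k * (Tdir l)ᵀ)) :
    (∀ (K : ℕ) (t : ℕ → ℝ),
        G t K = ∑ k ∈ Finset.range K, (t (k + 1) - t k) • F (t k)) ∧
    (∀ ε > (0 : ℝ), ∃ δ > (0 : ℝ), ∀ (K : ℕ) (t : ℕ → ℝ), 0 < K →
        t 0 = 0 → t K = tf →
        (∀ k < K, t k < t (k + 1)) → (∀ k < K, t (k + 1) - t k < δ) →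
        ‖G t K - ∫ s in (0 : ℝ)..tf, F s‖ < ε) := by
  -- the conjugation by `Tdir l` is trivial and `Ψ = c² • F`
  have hconj : ∀ (l : Fin 2) (X : Matrix (Fin n) (Fin n) ℝ),
      Tdir l * X * (Tdir l)ᵀ = X := by
    subst hTdir
    intro l X
    fin_cases l <;>
      simp [Matrix.transpose_neg, Matrix.transpose_one]
  have hsq : ∀ l : Fin 2, sgn l ^ 2 = 1 := by
    subst hsgn; intro l; fin_cases l <;> norm_num
  have hΨF : ∀ (t : ℕ → ℝ) (l : Fin 2) (k : ℕ),
      Ψ t l k = (c ^ 2) • F (t k) := by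
    intro t l k
    rw [hΨ, hF]
    exact psi_eq A C c (t k) (sgn l) (hsq l)
  have part1 : ∀ (K : ℕ) (t : ℕ → ℝ),
      G t K = ∑ k ∈ Finset.range K, (t (k + 1) - t k) • F (t k) := by
    intro K t
    have hc2 : (c : ℝ) ^ 2 ≠ 0 := pow_ne_zero _ hc.ne'
    rw [hG]
    have hsum : ∀ l : Fin 2,
        ∑ k ∈ Finset.range K, (t (k + 1) - t k) • (Tdir l * Ψ t l k * (Tdir l)ᵀ)
          = (c ^ 2) • ∑ k ∈ Finset.range K, (t (k + 1) - t k) • F (t k) := by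
      intro l
      rw [Finset.smul_sum]
      refine Finset.sum_congr rfl fun k _ => ?_
      rw [hconj l, hΨF t l k, smul_comm]
    simp only [hsum]
    rw [Fin.sum_univ_two, smul_smul, ← add_smul]
    have : (1 / (2 * c ^ 2) * c ^ 2 + 1 / (2 * c ^ 2) * c ^ 2 : ℝ) = 1 := by
      field_simp; ring
    rw [this, one_smul]
  refine ⟨part1, ?_⟩
  -- Part 2: Riemann sums converge
  have hFcont : Continuous F := by
    rw [hF]
    exact ((exp_smul_cont' Aᵀ).matrix_mul continuous_const).matrix_mul (exp_smul_cont' A)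
  intro ε hε
  have hε' : (0 : ℝ) < ε / (2 * tf) := by positivity
  obtain ⟨δ, hδ, hδε⟩ := Metric.uniformContinuousOn_iff.mp
    (isCompact_Icc.uniformContinuousOn_of_continuous hFcont.continuousOn)
    (ε / (2 * tf)) hε'
  refine ⟨δ, hδ, ?_⟩
  intro K t hK h0 hKtf hlt hmesh
  have mono : ∀ i j, i ≤ j → j ≤ K → t i ≤ t j := by
    intro i j hij hjK
    induction j with
    | zero => simp [Nat.le_zero.mp hij]
    | succ m ih =>
      rcases eq_or_lt_of_le hij with rfl | h
      · exact le_rfl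
      · exact le_trans (ih (Nat.lt_succ_iff.mp h) (Nat.le_of_succ_le hjK))
          (hlt m (Nat.lt_of_succ_le hjK)).le
  have hmem : ∀ k, k ≤ K → t k ∈ Set.Icc (0 : ℝ) tf := by
    intro k hk
    exact ⟨h0 ▸ mono 0 k (Nat.zero_le _) hk, hKtf ▸ mono k K hk le_rfl⟩
  have hint := fun a b : ℝ => hFcont.intervalIntegrable (μ := volume) a b
  have hsplit : (∫ s in (0 : ℝ)..tf, F s)
      = ∑ k ∈ Finset.range K, ∫ s in (t k)..(t (k + 1)), F s := by
    rw [← h0, ← hKtf]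
    exact (intervalIntegral.sum_integral_adjacent_intervals fun k _ => hint _ _).symm
  rw [part1, hsplit, ← Finset.sum_sub_distrib]
  have hterm : ∀ k ∈ Finset.range K,
      ‖(t (k + 1) - t k) • F (t k) - ∫ s in (t k)..(t (k + 1)), F s‖
        ≤ (ε / (2 * tf)) * (t (k + 1) - t k) := by
    intro k hk
    rw [Finset.mem_range] at hk
    have hΔ : t k < t (k + 1) := hlt k hk
    have heq : (t (k + 1) - t k) • F (t k) - ∫ s in (t k)..(t (k + 1)), F s
        = ∫ s in (t k)..(t (k + 1)), (F (t k) - F s) := by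
      rw [intervalIntegral.integral_sub (intervalIntegrable_const) (hint _ _),
        intervalIntegral.integral_const]
    rw [heq]
    have hb : ∀ s ∈ Set.uIoc (t k) (t (k + 1)), ‖F (t k) - F s‖ ≤ ε / (2 * tf) := by
      intro s hs
      rw [Set.uIoc_of_le hΔ.le] at hs
      have hsmem : s ∈ Set.Icc (0 : ℝ) tf := by
        constructor
        · exact le_trans (hmem k hk.le).1 hs.1.le
        · exact le_trans hs.2 (hmem (k + 1) hk).2
      have hd : dist (t k) s < δ := by
        rw [Real.dist_eq, abs_of_nonpos (by linarith [hs.1])]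
        have := hmesh k hk
        linarith [hs.2]
      rw [← dist_eq_norm]
      exact le_of_lt (hδε (t k) (hmem k hk.le) s hsmem hd)
    calc ‖∫ s in (t k)..(t (k + 1)), (F (t k) - F s)‖
        ≤ (ε / (2 * tf)) * |t (k + 1) - t k| :=
          intervalIntegral.norm_integral_le_of_norm_le_const hb
      _ = (ε / (2 * tf)) * (t (k + 1) - t k) := by
          rw [abs_of_pos (by linarith)]
  calc ‖∑ k ∈ Finset.range K, ((t (k + 1) - t k) • F (t k) - ∫ s in (t k)..(t (k + 1)), F s)‖
      ≤ ∑ k ∈ Finset.range K, ‖(t (k + 1) - t k) • F (t k) - ∫ s in (t k)..(t (k + 1)), F s‖ :=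
        norm_sum_le _ _
    _ ≤ ∑ k ∈ Finset.range K, (ε / (2 * tf)) * (t (k + 1) - t k) :=
        Finset.sum_le_sum hterm
    _ = (ε / (2 * tf)) * (t K - t 0) := by
        rw [← Finset.mul_sum, Finset.sum_range_sub]
    _ = ε / 2 := by rw [h0, hKtf]; field_simp; ring
    _ < ε := by linarith
end
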